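/- Let P be a program over 𝒰 and A, B ⊆ 𝒰. If P satisfies criterion Ω_{A,B}, then no B-relativized A-simplification of P exists (P is not B-relativized A-simplifiable). -/

import Mathlib

/-- An extended rule over a type of atoms: head, positive body, negative body,
double-negated body. -/
structure ASPRule (Atom : Type) where
  head : Finset Atom
  pos : Finset Atom
  neg : Finset Atom
  nneg : Finset Atom
deriving DecidableEq

/-- A program is a finite set of rules. -/
abbrev ASPProgram (Atom : Type) [DecidableEq Atom] := Finset (ASPRule Atom)

section Defs

variable {Atom : Type} [DecidableEq Atom] [Fintype Atom]

/-- A rule is over `S` if all its atoms lie in `S`. -/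
def ruleOver (r : ASPRule Atom) (S : Finset Atom) : Prop :=
  r.head ⊆ S ∧ r.pos ⊆ S ∧ r.neg ⊆ S ∧ r.nneg ⊆ S

/-- A program is over `S` if all its rules are over `S`. -/
def progOver (P : ASPProgram Atom) (S : Finset Atom) : Prop :=
  ∀ r ∈ P, ruleOver r S

/-- `I` satisfies (is a model of) rule `r`. -/
def satRule (I : Finset Atom) (r : ASPRule Atom) : Prop :=
  ((r.head ∪ r.neg) ∩ I).Nonempty ∨ ¬ (r.pos ∪ r.nneg ⊆ I)

/-- `I` is a model of program `P`. -/
def sat (I : Finset Atom) (P : ASPProgram Atom) : Prop :=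
  ∀ r ∈ P, satRule I r

/-- The GL-reduct `P^I`. -/
def reduct (P : ASPProgram Atom) (I : Finset Atom) : ASPProgram Atom :=
  (P.filter (fun r => r.neg ∩ I = ∅ ∧ r.nneg ⊆ I)).image
    (fun r => ⟨r.head, r.pos, ∅, ∅⟩)

/-- The answer sets of `P`: minimal models of the reduct. -/
def AS (P : ASPProgram Atom) : Set (Finset Atom) :=
  {I | sat I (reduct P I) ∧ ∀ J ⊂ I, ¬ sat J (reduct P I)}

/-- Projection of a program onto `𝒰 ∖ A`: rules with a head or negative-body atom
from `A` are dropped; in the remaining rules the atoms of `A` are removed from the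
positive and double-negated bodies. -/
def projAway (P : ASPProgram Atom) (A : Finset Atom) : ASPProgram Atom :=
  (P.filter (fun r => r.neg ∩ A = ∅ ∧ r.head ∩ A = ∅)).image
    (fun r => ⟨r.head, r.pos \ A, r.neg, r.nneg \ A⟩)

/-- `R` is `A`-separated: a union of a program over `𝒰 ∖ A` and a program over `A`. -/
def ASeparated (R : ASPProgram Atom) (A : Finset Atom) : Prop :=
  ∃ R₁ R₂ : ASPProgram Atom, R = R₁ ∪ R₂ ∧ progOver R₁ Aᶜ ∧ progOver R₂ A

/-- The defining equation of a (strong) `A`-simplification of `P` relative to `B`: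
`AS(P ∪ R)_{|Ā} = AS(Q ∪ R_{|Ā})` for every `A`-separated program `R` over `B`. -/
def SimpEq (P : ASPProgram Atom) (A B : Finset Atom) (Q : ASPProgram Atom) : Prop :=
  ∀ R : ASPProgram Atom, progOver R B → ASeparated R A →
    (fun I => I \ A) '' AS (P ∪ R) = AS (Q ∪ projAway R A)

/-- The SE-models of `P`. -/
def SE (P : ASPProgram Atom) : Set (Finset Atom × Finset Atom) :=
  {p | p.1 ⊆ p.2 ∧ sat p.2 P ∧ sat p.1 (reduct P p.2)}

/-- The (relativized) `B`-SE-models of `P`. -/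
def SEB (B : Finset Atom) (P : ASPProgram Atom) : Set (Finset Atom × Finset Atom) :=
  {p | (p.1 = p.2 ∨ p.1 ⊂ p.2 ∩ B) ∧ sat p.2 P ∧
    (∀ Y' ⊂ p.2, Y' ∩ B = p.2 ∩ B → ¬ sat Y' (reduct P p.2)) ∧
    (p.1 ⊂ p.2 → ∃ X' ⊆ p.2, X' ∩ B = p.1 ∧ sat X' (reduct P p.2))}

/-- `SE^{A₁,A₂}(P)`: the `A₂`-SE-models `⟨X,Y⟩` of `P` with `Y ⊆ A₁`. -/
def SERel (P : ASPProgram Atom) (A₁ A₂ : Finset Atom) : Set (Finset Atom × Finset Atom) :=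
  {p | p ∈ SEB A₂ P ∧ p.2 ⊆ A₁}

/-- `P` satisfies `Δʳ` for `A`, `B`. -/
def DeltaR (P : ASPProgram Atom) (A B : Finset Atom) : Prop :=
  (∀ Y : Finset Atom, (Y, Y) ∈ SEB B P → A ∩ B ⊆ Y) ∧
  (∀ X Y : Finset Atom, (X, Y) ∈ SE P → (Y, Y) ∈ SEB B P → X \ A = Y \ A → X = Y) ∧
  (∀ X Y : Finset Atom, (X, Y) ∈ SEB B P → (X ∪ (Y ∩ A ∩ B), Y) ∈ SEB B P)

/-- The family `𝓡^Y_{⟨P,A,B⟩}`. -/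
def RFam (P : ASPProgram Atom) (A B Y : Finset Atom) : Set (Set (Finset Atom)) :=
  {S | ∃ A' ⊆ A, (Y ∪ A', Y ∪ A') ∈ SEB B P ∧
    S = {Z | ∃ X : Finset Atom, (X, Y ∪ A') ∈ SEB B P ∧ Z = X \ A}}

/-- `P` satisfies criterion `Ω_{A,B}`: for some `Y ⊆ 𝒰 ∖ A` the family
`𝓡^Y_{⟨P,A,B⟩}` is non-empty and has no `⊆`-least element. -/
def OmegaCrit (P : ASPProgram Atom) (A B : Finset Atom) : Prop :=
  ∃ Y : Finset Atom, Y ⊆ Aᶜ ∧ (RFam P A B Y).Nonempty ∧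
    ¬ ∃ S ∈ RFam P A B Y, ∀ T ∈ RFam P A B Y, S ⊆ T

/-- `⋂ 𝓡^Y_{⟨P,A,B⟩}`, taken to be `∅` when the family is empty. -/
def RInter (P : ASPProgram Atom) (A B Y : Finset Atom) : Set (Finset Atom) :=
  {X | (RFam P A B Y).Nonempty ∧ ∀ S ∈ RFam P A B Y, X ∈ S}

/-- The `A`-`B`-SE-models `SE^B_A(P)` of `P`. -/
def SEBA (P : ASPProgram Atom) (A B : Finset Atom) : Set (Finset Atom × Finset Atom) :=
  {p | ∃ Y : Finset Atom, (Y, Y) ∈ SEB B P ∧ p = (Y \ A, Y \ A)} ∪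
  {p | ∃ X Y : Finset Atom, (X, Y) ∈ SEB B P ∧ X ⊂ Y ∧
    (∀ Y' : Finset Atom, (Y', Y') ∈ SEB B P → Y' \ A = Y \ A →
      ∃ X' : Finset Atom, (X', Y') ∈ SEB B P ∧ X' \ A = X \ A) ∧
    p = (X \ A, Y \ A)}

end Defs

set_option linter.unusedSectionVars false

section Aux

variable {Atom : Type} [DecidableEq Atom] [Fintype Atom]

lemma mem_reduct {P : ASPProgram Atom} {I : Finset Atom} {r' : ASPRule Atom} :
    r' ∈ reduct P I ↔ ∃ r, r ∈ P ∧ r.neg ∩ I = ∅ ∧ r.nneg ⊆ I ∧ r' = ⟨r.head, r.pos, ∅, ∅⟩ := by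
  simp only [reduct, Finset.mem_image, Finset.mem_filter]
  constructor
  · rintro ⟨r, ⟨hr, h1, h2⟩, rfl⟩; exact ⟨r, hr, h1, h2, rfl⟩
  · rintro ⟨r, hr, h1, h2, rfl⟩; exact ⟨r, ⟨hr, h1, h2⟩, rfl⟩

lemma reduct_union (P R : ASPProgram Atom) (I : Finset Atom) :
    reduct (P ∪ R) I = reduct P I ∪ reduct R I := by
  simp [reduct, Finset.filter_union, Finset.image_union]

lemma sat_union {I : Finset Atom} {P R : ASPProgram Atom} :
    sat I (P ∪ R) ↔ sat I P ∧ sat I R := by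
  simp only [sat, Finset.mem_union]
  constructor
  · intro h; exact ⟨fun r hr => h r (Or.inl hr), fun r hr => h r (Or.inr hr)⟩
  · rintro ⟨h1, h2⟩ r (hr | hr); exacts [h1 r hr, h2 r hr]

lemma satRule_reduced {I : Finset Atom} {r : ASPRule Atom} (h1 : r.neg ∩ I = ∅) (h2 : r.nneg ⊆ I) :
    satRule I (⟨r.head, r.pos, ∅, ∅⟩ : ASPRule Atom) ↔ satRule I r := by
  unfold satRule
  simp only [Finset.union_empty]
  constructor
  · rintro (hh | hh)
    · obtain ⟨x, hx⟩ := hh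
      rw [Finset.mem_inter] at hx
      exact Or.inl ⟨x, Finset.mem_inter.mpr ⟨Finset.mem_union_left _ hx.1, hx.2⟩⟩
    · exact Or.inr fun hsub => hh (le_trans Finset.subset_union_left hsub)
  · rintro (hh | hh)
    · left
      obtain ⟨x, hx⟩ := hh
      rw [Finset.mem_inter, Finset.mem_union] at hx
      rcases hx.1 with h | h
      · exact ⟨x, Finset.mem_inter.mpr ⟨h, hx.2⟩⟩
      · exact absurd (Finset.mem_inter.mpr ⟨h, hx.2⟩) (by simp [h1])
    · exact Or.inr fun hsub => hh (Finset.union_subset hsub h2)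

lemma sat_reduct_iff {I : Finset Atom} {P : ASPProgram Atom} :
    sat I (reduct P I) ↔ sat I P := by
  constructor
  · intro h r hr
    by_cases h1 : r.neg ∩ I = ∅
    · by_cases h2 : r.nneg ⊆ I
      · exact (satRule_reduced h1 h2).mp (h _ (mem_reduct.mpr ⟨r, hr, h1, h2, rfl⟩))
      · exact Or.inr fun hsub => h2 (le_trans Finset.subset_union_right hsub)
    · left
      obtain ⟨x, hx⟩ := Finset.nonempty_iff_ne_empty.mpr h1
      rw [Finset.mem_inter] at hx
      exact ⟨x, Finset.mem_inter.mpr ⟨Finset.mem_union_right _ hx.1, hx.2⟩⟩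
  · intro h r' hr'
    obtain ⟨r, hr, h1, h2, rfl⟩ := mem_reduct.mp hr'
    exact (satRule_reduced h1 h2).mpr (h r hr)

def positiveProg (R : ASPProgram Atom) : Prop := ∀ r ∈ R, r.neg = ∅ ∧ r.nneg = ∅

lemma reduct_positive {R : ASPProgram Atom} (h : positiveProg R) (I : Finset Atom) :
    reduct R I = R := by
  ext r'
  rw [mem_reduct]
  constructor
  · rintro ⟨r, hr, h1, h2, rfl⟩
    obtain ⟨e1, e2⟩ := h r hr
    have : (⟨r.head, r.pos, ∅, ∅⟩ : ASPRule Atom) = r := by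
      cases r; simp_all
    rw [this]; exact hr
  · intro hr
    obtain ⟨e1, e2⟩ := h r' hr
    exact ⟨r', hr, by simp [e1], by simp [e2], by cases r'; simp_all⟩

end Aux

section Aux2

variable {Atom : Type} [DecidableEq Atom] [Fintype Atom]

lemma satRule_congr {r : ASPRule Atom} {S I₁ I₂ : Finset Atom} (hr : ruleOver r S)
    (h : I₁ ∩ S = I₂ ∩ S) : satRule I₁ r ↔ satRule I₂ r := by
  obtain ⟨h1, h2, h3, h4⟩ := hr
  have key : ∀ x ∈ S, x ∈ I₁ ↔ x ∈ I₂ := by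
    intro x hx
    constructor <;> intro hxi
    · have : x ∈ I₂ ∩ S := by rw [← h]; exact Finset.mem_inter.mpr ⟨hxi, hx⟩
      exact (Finset.mem_inter.mp this).1
    · have : x ∈ I₁ ∩ S := by rw [h]; exact Finset.mem_inter.mpr ⟨hxi, hx⟩
      exact (Finset.mem_inter.mp this).1
  have aux : ∀ {J K : Finset Atom}, (∀ x ∈ S, x ∈ J ↔ x ∈ K) → satRule J r → satRule K r := by
    intro J K hJK hs
    rcases hs with ⟨x, hx⟩ | hh
    · rw [Finset.mem_inter] at hx
      have hxS : x ∈ S := by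
        rcases Finset.mem_union.mp hx.1 with h' | h'
        · exact h1 h'
        · exact h3 h'
      exact Or.inl ⟨x, Finset.mem_inter.mpr ⟨hx.1, (hJK x hxS).mp hx.2⟩⟩
    · refine Or.inr fun hsub => hh fun x hx => ?_
      have hxS : x ∈ S := by
        rcases Finset.mem_union.mp hx with h' | h'
        · exact h2 h'
        · exact h4 h'
      exact (hJK x hxS).mpr (hsub hx)
  exact ⟨aux key, aux fun x hx => (key x hx).symm⟩

lemma sat_congr {R : ASPProgram Atom} {S I₁ I₂ : Finset Atom} (hR : progOver R S)
    (h : I₁ ∩ S = I₂ ∩ S) : sat I₁ R ↔ sat I₂ R :=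
  forall₂_congr fun r hr => satRule_congr (hR r hr) h

lemma reduct_progOver {R : ASPProgram Atom} {S : Finset Atom} (hR : progOver R S) (I : Finset Atom) :
    progOver (reduct R I) S := by
  intro r' hr'
  obtain ⟨r, hr, _, _, rfl⟩ := mem_reduct.mp hr'
  obtain ⟨a, b, _, _⟩ := hR r hr
  exact ⟨a, b, Finset.empty_subset _, Finset.empty_subset _⟩

lemma sat_reduct_congr {R : ASPProgram Atom} {S I₁ I₂ Y : Finset Atom} (hR : progOver R S)
    (h : I₁ ∩ S = I₂ ∩ S) : sat I₁ (reduct R Y) ↔ sat I₂ (reduct R Y) :=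
  sat_congr (reduct_progOver hR Y) h

lemma mem_SEB {B : Finset Atom} {P : ASPProgram Atom} {X Y : Finset Atom} :
    (X, Y) ∈ SEB B P ↔ (X = Y ∨ X ⊂ Y ∩ B) ∧ sat Y P ∧
      (∀ Y' ⊂ Y, Y' ∩ B = Y ∩ B → ¬ sat Y' (reduct P Y)) ∧
      (X ⊂ Y → ∃ X' ⊆ Y, X' ∩ B = X ∧ sat X' (reduct P Y)) := Iff.rfl

lemma ASchar {P R : ASPProgram Atom} {B : Finset Atom} (hR : progOver R B) (Y : Finset Atom) :
    Y ∈ AS (P ∪ R) ↔ ((Y, Y) ∈ SEB B P ∧ sat Y R ∧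
      ∀ X, (X, Y) ∈ SEB B P → X ⊂ Y ∩ B → ¬ sat X (reduct R Y)) := by
  have hdecomp : Y ∈ AS (P ∪ R) ↔ (sat Y (reduct P Y) ∧ sat Y (reduct R Y)) ∧
      ∀ J ⊂ Y, ¬ (sat J (reduct P Y) ∧ sat J (reduct R Y)) := by
    unfold AS
    rw [Set.mem_setOf_eq, reduct_union]
    simp only [sat_union]
  rw [hdecomp, mem_SEB]
  constructor
  · rintro ⟨⟨hP, hRY⟩, hmin⟩
    have hsatYP : sat Y P := sat_reduct_iff.mp hP
    refine ⟨⟨Or.inl rfl, hsatYP, ?_, fun hc => absurd hc (lt_irrefl Y)⟩,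
      sat_reduct_iff.mp hRY, ?_⟩
    · intro Y' hY' hYB hsatY'
      exact hmin Y' hY' ⟨hsatY', (sat_reduct_congr hR (by rw [hYB])).mpr hRY⟩
    · intro X hX hXB hsatXR
      obtain ⟨_, _, _, hcond⟩ := mem_SEB.mp hX
      have hXY : X ⊂ Y := lt_of_lt_of_le hXB Finset.inter_subset_left
      obtain ⟨X', hX'Y, hX'B, hsatX'⟩ := hcond hXY
      have hX'ssub : X' ⊂ Y := by
        refine lt_of_le_of_ne hX'Y fun he => ?_
        rw [he] at hX'B
        exact absurd hX'B (ne_of_lt hXB).symm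
      apply hmin X' hX'ssub
      refine ⟨hsatX', ?_⟩
      have hXsubB : X ⊆ B := le_trans (le_of_lt hXB) Finset.inter_subset_right
      have heq : X' ∩ B = X ∩ B := by rw [hX'B, Finset.inter_eq_left.mpr hXsubB]
      exact (sat_reduct_congr hR heq).mpr hsatXR
  · rintro ⟨hYSE, hYR, hkill⟩
    obtain ⟨_, hsatYP, hmincond, _⟩ := mem_SEB.mp hYSE
    refine ⟨⟨sat_reduct_iff.mpr hsatYP, sat_reduct_iff.mpr hYR⟩, ?_⟩
    rintro J hJ ⟨hJP, hJR⟩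
    by_cases hJB : J ∩ B = Y ∩ B
    · exact hmincond J hJ hJB hJP
    · have hJYB : J ∩ B ⊂ Y ∩ B :=
        lt_of_le_of_ne (Finset.inter_subset_inter (le_of_lt hJ) le_rfl) hJB
      have hSE : (J ∩ B, Y) ∈ SEB B P := by
        rw [mem_SEB]
        exact ⟨Or.inr hJYB, hsatYP, hmincond, fun _ => ⟨J, le_of_lt hJ, rfl, hJP⟩⟩
      apply hkill (J ∩ B) hSE hJYB
      exact (sat_reduct_congr hR (by rw [Finset.inter_assoc, Finset.inter_self])).mp hJR

end Aux2

section Aux3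

variable {Atom : Type} [DecidableEq Atom] [Fintype Atom]

def factsP (S : Finset Atom) : ASPProgram Atom := S.image fun a => ⟨{a}, ∅, ∅, ∅⟩

def loopsP (S : Finset Atom) : ASPProgram Atom := (S ×ˢ S).image fun p => ⟨{p.1}, {p.2}, ∅, ∅⟩

def exrulesP (C : Finset Atom) (N : Finset (Finset Atom)) : ASPProgram Atom :=
  N.image fun n => ⟨C \ n, n, ∅, ∅⟩

lemma positive_facts (S : Finset Atom) : positiveProg (factsP S) := by
  intro r hr
  obtain ⟨a, _, rfl⟩ := Finset.mem_image.mp hr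
  exact ⟨rfl, rfl⟩

lemma positive_loops (S : Finset Atom) : positiveProg (loopsP S) := by
  intro r hr
  obtain ⟨p, _, rfl⟩ := Finset.mem_image.mp hr
  exact ⟨rfl, rfl⟩

lemma positive_exrules (C : Finset Atom) (N : Finset (Finset Atom)) :
    positiveProg (exrulesP C N) := by
  intro r hr
  obtain ⟨n, _, rfl⟩ := Finset.mem_image.mp hr
  exact ⟨rfl, rfl⟩

lemma positive_union {R₁ R₂ : ASPProgram Atom} (h1 : positiveProg R₁) (h2 : positiveProg R₂) :
    positiveProg (R₁ ∪ R₂) := by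
  intro r hr
  rcases Finset.mem_union.mp hr with h | h
  exacts [h1 r h, h2 r h]

lemma progOver_facts {S T : Finset Atom} (h : S ⊆ T) : progOver (factsP S) T := by
  intro r hr
  obtain ⟨a, ha, rfl⟩ := Finset.mem_image.mp hr
  exact ⟨Finset.singleton_subset_iff.mpr (h ha), Finset.empty_subset _,
    Finset.empty_subset _, Finset.empty_subset _⟩

lemma progOver_loops {S T : Finset Atom} (h : S ⊆ T) : progOver (loopsP S) T := by
  intro r hr
  obtain ⟨p, hp, rfl⟩ := Finset.mem_image.mp hr
  rw [Finset.mem_product] at hp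
  exact ⟨Finset.singleton_subset_iff.mpr (h hp.1), Finset.singleton_subset_iff.mpr (h hp.2),
    Finset.empty_subset _, Finset.empty_subset _⟩

lemma progOver_exrules {C T : Finset Atom} {N : Finset (Finset Atom)} (hC : C ⊆ T)
    (hN : ∀ n ∈ N, n ⊆ T) : progOver (exrulesP C N) T := by
  intro r hr
  obtain ⟨n, hn, rfl⟩ := Finset.mem_image.mp hr
  exact ⟨le_trans (Finset.sdiff_subset) hC, hN n hn, Finset.empty_subset _, Finset.empty_subset _⟩

lemma progOver_union {R₁ R₂ : ASPProgram Atom} {T : Finset Atom} (h1 : progOver R₁ T)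
    (h2 : progOver R₂ T) : progOver (R₁ ∪ R₂) T := by
  intro r hr
  rcases Finset.mem_union.mp hr with h | h
  exacts [h1 r h, h2 r h]

lemma satRule_fact {I : Finset Atom} {a : Atom} :
    satRule I (⟨{a}, ∅, ∅, ∅⟩ : ASPRule Atom) ↔ a ∈ I := by
  simp [satRule, Finset.Nonempty]

lemma satRule_loop {I : Finset Atom} {a b : Atom} :
    satRule I (⟨{a}, {b}, ∅, ∅⟩ : ASPRule Atom) ↔ (b ∈ I → a ∈ I) := by
  simp [satRule, Finset.Nonempty]
  tauto

lemma satRule_exrule {I C n : Finset Atom} :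
    satRule I (⟨C \ n, n, ∅, ∅⟩ : ASPRule Atom) ↔ (n ⊆ I → ((C \ n) ∩ I).Nonempty) := by
  simp only [satRule, Finset.union_empty]
  tauto

lemma sat_facts {I S : Finset Atom} : sat I (factsP S) ↔ S ⊆ I := by
  unfold sat factsP
  simp only [Finset.mem_image, forall_exists_index, and_imp, forall_apply_eq_imp_iff₂]
  constructor
  · intro h a ha; exact satRule_fact.mp (h a ha)
  · intro h a ha; exact satRule_fact.mpr (h ha)

lemma sat_loops {I S : Finset Atom} :
    sat I (loopsP S) ↔ ∀ a ∈ S, ∀ b ∈ S, b ∈ I → a ∈ I := by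
  unfold sat loopsP
  simp only [Finset.mem_image, forall_exists_index, and_imp, forall_apply_eq_imp_iff₂]
  constructor
  · intro h a ha b hb
    exact satRule_loop.mp (h (a, b) (Finset.mem_product.mpr ⟨ha, hb⟩))
  · rintro h ⟨a, b⟩ hab
    rw [Finset.mem_product] at hab
    exact satRule_loop.mpr (h a hab.1 b hab.2)

lemma sat_exrules {I C : Finset Atom} {N : Finset (Finset Atom)} :
    sat I (exrulesP C N) ↔ ∀ n ∈ N, n ⊆ I → ((C \ n) ∩ I).Nonempty := by
  unfold sat exrulesP
  simp only [Finset.mem_image, forall_exists_index, and_imp, forall_apply_eq_imp_iff₂]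
  constructor
  · intro h n hn; exact satRule_exrule.mp (h n hn)
  · intro h n hn; exact satRule_exrule.mpr (h n hn)

lemma facts_union (S T : Finset Atom) : factsP (S ∪ T) = factsP S ∪ factsP T :=
  Finset.image_union _ _

lemma sdiff_of_sub_compl {s A : Finset Atom} (h : s ⊆ Aᶜ) : s \ A = s := by
  ext x
  simp only [Finset.mem_sdiff, and_iff_left_iff_imp]
  intro hx
  simpa using h hx

lemma inter_empty_of_sub_compl {s A : Finset Atom} (h : s ⊆ Aᶜ) : s ∩ A = ∅ := by
  ext x
  simp only [Finset.mem_inter, Finset.notMem_empty, iff_false, not_and]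
  intro hx
  simpa using h hx

lemma projAway_union (P R : ASPProgram Atom) (A : Finset Atom) :
    projAway (P ∪ R) A = projAway P A ∪ projAway R A := by
  simp [projAway, Finset.filter_union, Finset.image_union]

lemma projAway_over_compl {R : ASPProgram Atom} {A : Finset Atom} (h : progOver R Aᶜ) :
    projAway R A = R := by
  ext r'
  simp only [projAway, Finset.mem_image, Finset.mem_filter]
  constructor
  · rintro ⟨r, ⟨hr, _, _⟩, rfl⟩
    obtain ⟨_, h2, _, h4⟩ := h r hr
    have e2 : r.pos \ A = r.pos := sdiff_of_sub_compl h2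
    have e4 : r.nneg \ A = r.nneg := sdiff_of_sub_compl h4
    rw [e2, e4]
    exact hr
  · intro hr
    obtain ⟨h1, h2, h3, h4⟩ := h r' hr
    refine ⟨r', ⟨hr, inter_empty_of_sub_compl h3, inter_empty_of_sub_compl h1⟩, ?_⟩
    rw [sdiff_of_sub_compl h2, sdiff_of_sub_compl h4]

lemma projAway_facts_sub {S A : Finset Atom} (h : S ⊆ A) : projAway (factsP S) A = ∅ := by
  ext r'
  simp only [projAway, factsP, Finset.mem_image, Finset.mem_filter, Finset.notMem_empty,
    iff_false, not_exists]
  rintro r ⟨⟨⟨a, ha, rfl⟩, _, hhead⟩, _⟩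
  have : a ∈ ({a} : Finset Atom) ∩ A :=
    Finset.mem_inter.mpr ⟨Finset.mem_singleton_self a, h ha⟩
  rw [show ({a} : Finset Atom) ∩ A = (⟨{a}, ∅, ∅, ∅⟩ : ASPRule Atom).head ∩ A from rfl, hhead] at this
  exact absurd this (Finset.notMem_empty a)

end Aux3

/-- if `P` satisfies `Ω_{A,B}`, no `B`-relativized `A`-simplification
of `P` exists. -/
theorem stmt6 {Atom : Type} [DecidableEq Atom] [Fintype Atom]
    (P : ASPProgram Atom) (A B : Finset Atom) (h : OmegaCrit P A B) :
    ¬ ∃ Q : ASPProgram Atom, progOver Q Aᶜ ∧ SimpEq P A B Q := by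
  classical
  rintro ⟨Q, hQover, hsimp⟩
  obtain ⟨Y, hYA, hne, hnl⟩ := h
  set C := Y ∩ B with hC
  have hCY : C ⊆ Y := Finset.inter_subset_left
  have hCB : C ⊆ B := Finset.inter_subset_right
  have hCcompl : C ⊆ Aᶜ := le_trans hCY hYA
  have hYsd : Y \ A = Y := sdiff_of_sub_compl hYA
  have hWproj : ∀ A' ⊆ A, (Y ∪ A') \ A = Y := by
    intro A' hA'
    rw [Finset.union_sdiff_distrib, hYsd, Finset.sdiff_eq_empty_iff_subset.mpr hA',
      Finset.union_empty]
  have hYinT : ∀ T ∈ RFam P A B Y, Y ∈ T := by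
    rintro T ⟨A', hA'sub, hW, rfl⟩
    exact ⟨Y ∪ A', hW, (hWproj A' hA'sub).symm⟩
  -- Step 0 : (Y,Y) is a B-SE-model of Q
  have hQYY : (Y, Y) ∈ SEB B Q := by
    obtain ⟨T₀, hT₀⟩ := hne
    obtain ⟨A₀, hA₀, hW₀, _⟩ := hT₀
    set R : ASPProgram Atom := factsP (C ∪ A₀ ∩ B) with hRdef
    have hRoverB : progOver R B :=
      progOver_facts (Finset.union_subset hCB Finset.inter_subset_right)
    have hRsep : ASeparated R A := by
      refine ⟨factsP C, factsP (A₀ ∩ B), ?_, progOver_facts hCcompl,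
        progOver_facts (le_trans Finset.inter_subset_left hA₀)⟩
      rw [hRdef, facts_union]
    have hW₀AS : Y ∪ A₀ ∈ AS (P ∪ R) := by
      rw [ASchar hRoverB]
      refine ⟨hW₀, ?_, ?_⟩
      · rw [sat_facts]
        exact Finset.union_subset (le_trans hCY Finset.subset_union_left)
          (le_trans Finset.inter_subset_left Finset.subset_union_right)
      · intro X hX hXsub hsatX
        rw [reduct_positive (positive_facts _), sat_facts] at hsatX
        have hsub : (Y ∪ A₀) ∩ B ⊆ X := by
          rw [Finset.union_inter_distrib_right]; exact hsatX
        exact (ne_of_lt hXsub) (Finset.Subset.antisymm (le_of_lt hXsub) hsub)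
    have hYmem : Y ∈ AS (Q ∪ projAway R A) := by
      rw [← hsimp R hRoverB hRsep]
      exact ⟨Y ∪ A₀, hW₀AS, hWproj A₀ hA₀⟩
    have hproj : projAway R A = factsP C := by
      rw [hRdef, facts_union, projAway_union, projAway_over_compl (progOver_facts hCcompl),
        projAway_facts_sub (le_trans Finset.inter_subset_left hA₀), Finset.union_empty]
    rw [hproj] at hYmem
    exact ((ASchar (progOver_facts hCB) Y).mp hYmem).1
  -- Step A : every B-SE-model (Z,Y) of Q gives Z in every member of the family
  have stepA : ∀ Z, (Z, Y) ∈ SEB B Q → ∀ T ∈ RFam P A B Y, Z ∈ T := by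
    intro Z hZQ T hT
    by_contra hZT
    obtain ⟨A', hA'sub, hW, rfl⟩ := hT
    have hZY : Z ≠ Y := by
      rintro rfl
      exact hZT (hYinT _ ⟨A', hA'sub, hW, rfl⟩)
    have hZC : Z ⊂ C := by
      rcases (mem_SEB.mp hZQ).1 with h' | h'
      · exact absurd h' hZY
      · exact h'
    set R₁ : ASPProgram Atom := factsP Z ∪ loopsP (C \ Z) with hR₁
    set R : ASPProgram Atom := R₁ ∪ factsP (A' ∩ B) with hRdef
    have hZcompl : Z ⊆ Aᶜ := le_trans (le_of_lt hZC) hCcompl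
    have hCZcompl : C \ Z ⊆ Aᶜ := le_trans Finset.sdiff_subset hCcompl
    have hR₁compl : progOver R₁ Aᶜ :=
      progOver_union (progOver_facts hZcompl) (progOver_loops hCZcompl)
    have hR₁B : progOver R₁ B :=
      progOver_union (progOver_facts (le_trans (le_of_lt hZC) hCB))
        (progOver_loops (le_trans Finset.sdiff_subset hCB))
    have hRoverB : progOver R B := progOver_union hR₁B (progOver_facts Finset.inter_subset_right)
    have hRsep : ASeparated R A :=
      ⟨R₁, factsP (A' ∩ B), rfl, hR₁compl,
        progOver_facts (le_trans Finset.inter_subset_left hA'sub)⟩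
    have hpos : positiveProg R :=
      positive_union (positive_union (positive_facts _) (positive_loops _)) (positive_facts _)
    have hWB : (Y ∪ A') ∩ B = C ∪ A' ∩ B := Finset.union_inter_distrib_right _ _ _
    have hWAS : Y ∪ A' ∈ AS (P ∪ R) := by
      rw [ASchar hRoverB]
      refine ⟨hW, ?_, ?_⟩
      · simp only [hRdef, hR₁, sat_union, sat_facts, sat_loops]
        refine ⟨⟨le_trans (le_of_lt hZC) (le_trans hCY Finset.subset_union_left),
          fun a ha b hb hbW => ?_⟩,
          le_trans Finset.inter_subset_left Finset.subset_union_right⟩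
        exact Finset.mem_union_left _ (hCY (Finset.mem_sdiff.mp ha).1)
      · intro X hXSE hXsub hsatX
        rw [reduct_positive hpos] at hsatX
        simp only [hRdef, hR₁, sat_union, sat_facts, sat_loops] at hsatX
        obtain ⟨⟨hZX, hloop⟩, hA'X⟩ := hsatX
        have hXWB : X ⊆ (Y ∪ A') ∩ B := le_of_lt hXsub
        have hZ'C : X \ A ⊆ C := by
          intro x hx
          obtain ⟨hxX, hxA⟩ := Finset.mem_sdiff.mp hx
          have hx2 := hXWB hxX
          rw [hWB, Finset.mem_union] at hx2
          rcases hx2 with h' | h'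
          · exact h'
          · exact absurd (hA'sub (Finset.mem_inter.mp h').1) hxA
        by_cases hcase : ∃ b ∈ C \ Z, b ∈ X
        · obtain ⟨b, hb, hbX⟩ := hcase
          have hWBX : (Y ∪ A') ∩ B ⊆ X := by
            rw [hWB]
            refine Finset.union_subset ?_ hA'X
            intro c hc
            by_cases hcZ : c ∈ Z
            · exact hZX hcZ
            · exact hloop c (Finset.mem_sdiff.mpr ⟨hc, hcZ⟩) b hb hbX
          exact (ne_of_lt hXsub) (Finset.Subset.antisymm hXWB hWBX)
        · push_neg at hcase
          have hZ'Z : X \ A = Z := by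
            apply Finset.Subset.antisymm
            · intro x hx
              by_contra hxZ
              exact hcase x (Finset.mem_sdiff.mpr ⟨hZ'C hx, hxZ⟩) (Finset.mem_sdiff.mp hx).1
            · intro x hx
              exact Finset.mem_sdiff.mpr ⟨hZX hx, by simpa using hZcompl hx⟩
          exact hZT ⟨X, hXSE, hZ'Z.symm⟩
    have hYQ : Y ∈ AS (Q ∪ R₁) := by
      have hYmem : Y ∈ AS (Q ∪ projAway R A) := by
        rw [← hsimp R hRoverB hRsep]
        exact ⟨Y ∪ A', hWAS, hWproj A' hA'sub⟩
      have hproj : projAway R A = R₁ := by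
        rw [hRdef, projAway_union, projAway_over_compl hR₁compl,
          projAway_facts_sub (le_trans Finset.inter_subset_left hA'sub), Finset.union_empty]
      rwa [hproj] at hYmem
    have hk := ((ASchar hR₁B Y).mp hYQ).2.2 Z hZQ hZC
    apply hk
    rw [reduct_positive (positive_union (positive_facts _) (positive_loops _))]
    simp only [hR₁, sat_union, sat_facts, sat_loops]
    exact ⟨le_rfl, fun a ha b hb hbZ => absurd hbZ (Finset.mem_sdiff.mp hb).2⟩
  -- Step B : if Z is below C and in every member of the family, then (Z,Y) ∈ SEB B Q
  have stepB : ∀ Z, Z ⊂ C → (∀ T ∈ RFam P A B Y, Z ∈ T) → (Z, Y) ∈ SEB B Q := by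
    intro Z hZC hZall
    set R : ASPProgram Atom := factsP Z ∪ loopsP (C \ Z) with hRdef
    have hZcompl : Z ⊆ Aᶜ := le_trans (le_of_lt hZC) hCcompl
    have hRcompl : progOver R Aᶜ :=
      progOver_union (progOver_facts hZcompl) (progOver_loops (le_trans Finset.sdiff_subset hCcompl))
    have hRB : progOver R B :=
      progOver_union (progOver_facts (le_trans (le_of_lt hZC) hCB))
        (progOver_loops (le_trans Finset.sdiff_subset hCB))
    have hRsep : ASeparated R A :=
      ⟨R, ∅, (Finset.union_empty R).symm, hRcompl, fun r hr => absurd hr (Finset.notMem_empty r)⟩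
    have hpos : positiveProg R := positive_union (positive_facts _) (positive_loops _)
    have hZYlt : Z ⊂ Y := lt_of_lt_of_le hZC hCY
    have hnoW : Y ∉ AS (Q ∪ projAway R A) := by
      rw [← hsimp R hRB hRsep]
      rintro ⟨W, hWAS, hWY⟩
      have hWdecomp : W = Y ∪ W ∩ A := by
        rw [← hWY]; exact (Finset.sdiff_union_inter W A).symm
      have hWSE := ((ASchar hRB W).mp hWAS).1
      have hkill := ((ASchar hRB W).mp hWAS).2.2
      have hTmem : {Z' | ∃ X, (X, W) ∈ SEB B P ∧ Z' = X \ A} ∈ RFam P A B Y := by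
        refine ⟨W ∩ A, Finset.inter_subset_right, ?_, ?_⟩
        · rw [← hWdecomp]; exact hWSE
        · rw [← hWdecomp]
      obtain ⟨X, hXSE, hXZ⟩ := hZall _ hTmem
      have hWY' : W \ A = Y := hWY
      have hXW : X ≠ W := by
        intro he
        rw [he, hWY'] at hXZ
        exact (ne_of_lt hZYlt) hXZ
      have hXsub : X ⊂ W ∩ B := by
        rcases (mem_SEB.mp hXSE).1 with h' | h'
        · exact absurd h' hXW
        · exact h'
      apply hkill X hXSE hXsub
      rw [reduct_positive hpos]
      simp only [hRdef, sat_union, sat_facts, sat_loops]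
      refine ⟨hXZ ▸ Finset.sdiff_subset, ?_⟩
      intro a ha b hb hbX
      exfalso
      have hbZ : b ∈ Z := by
        rw [hXZ]
        refine Finset.mem_sdiff.mpr ⟨hbX, ?_⟩
        simpa using hCcompl (Finset.mem_sdiff.mp hb).1
      exact (Finset.mem_sdiff.mp hb).2 hbZ
    rw [projAway_over_compl hRcompl, ASchar hRB] at hnoW
    push_neg at hnoW
    obtain ⟨X, hXSE, hXC, hsatX⟩ := hnoW hQYY (by
      simp only [hRdef, sat_union, sat_facts, sat_loops]
      exact ⟨le_trans (le_of_lt hZC) hCY,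
        fun a ha b hb hbY => hCY (Finset.mem_sdiff.mp ha).1⟩)
    rw [reduct_positive hpos] at hsatX
    simp only [hRdef, sat_union, sat_facts, sat_loops] at hsatX
    obtain ⟨hZX, hloop⟩ := hsatX
    have hXeqZ : X = Z := by
      by_cases hcase : ∃ b ∈ C \ Z, b ∈ X
      · obtain ⟨b, hb, hbX⟩ := hcase
        exfalso
        have hCX : C ⊆ X := by
          intro c hc
          by_cases hcZ : c ∈ Z
          · exact hZX hcZ
          · exact hloop c (Finset.mem_sdiff.mpr ⟨hc, hcZ⟩) b hb hbX
        exact (ne_of_lt hXC) (Finset.Subset.antisymm (le_of_lt hXC) hCX)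
      · push_neg at hcase
        apply Finset.Subset.antisymm _ hZX
        intro x hx
        by_contra hxZ
        exact hcase x (Finset.mem_sdiff.mpr ⟨(le_of_lt hXC) hx, hxZ⟩) hx
    rwa [hXeqZ] at hXSE
  -- The final context program
  set Ncal : Finset (Finset Atom) :=
    C.powerset.filter (fun N => N ⊂ C ∧ ∀ T ∈ RFam P A B Y, N ∈ T) with hNcal
  set R₁ : ASPProgram Atom := exrulesP C Ncal with hR₁def
  have hNsub : ∀ N ∈ Ncal, N ⊆ C := fun N hN => Finset.mem_powerset.mp (Finset.mem_filter.mp hN).1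
  have hR₁B : progOver R₁ B := progOver_exrules hCB fun n hn => le_trans (hNsub n hn) hCB
  have hR₁compl : progOver R₁ Aᶜ :=
    progOver_exrules hCcompl fun n hn => le_trans (hNsub n hn) hCcompl
  have hpos : positiveProg R₁ := positive_exrules _ _
  have hYQAS : Y ∈ AS (Q ∪ R₁) := by
    rw [ASchar hR₁B]
    refine ⟨hQYY, ?_, ?_⟩
    · rw [sat_exrules]
      intro n hn _
      obtain ⟨x, hx1, hx2⟩ := Finset.exists_of_ssubset (Finset.mem_filter.mp hn).2.1
      exact ⟨x, Finset.mem_inter.mpr ⟨Finset.mem_sdiff.mpr ⟨hx1, hx2⟩, hCY hx1⟩⟩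
    · intro X hXSE hXC hsatX
      rw [reduct_positive hpos, sat_exrules] at hsatX
      have hXN : X ∈ Ncal :=
        Finset.mem_filter.mpr ⟨Finset.mem_powerset.mpr (le_of_lt hXC), hXC, stepA X hXSE⟩
      obtain ⟨x, hx⟩ := hsatX X hXN le_rfl
      rw [Finset.mem_inter, Finset.mem_sdiff] at hx
      exact hx.1.2 hx.2
  have hsep : ASeparated R₁ A :=
    ⟨R₁, ∅, (Finset.union_empty R₁).symm, hR₁compl, fun r hr => absurd hr (Finset.notMem_empty r)⟩
  have heq := hsimp R₁ hR₁B hsep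
  rw [projAway_over_compl hR₁compl] at heq
  have hYimg : Y ∈ (fun I => I \ A) '' AS (P ∪ R₁) := by rw [heq]; exact hYQAS
  obtain ⟨W, hWAS, hWY⟩ := hYimg
  have hWSE := ((ASchar hR₁B W).mp hWAS).1
  have hkill := ((ASchar hR₁B W).mp hWAS).2.2
  have hWdecomp : W = Y ∪ W ∩ A := by
    rw [← hWY]; exact (Finset.sdiff_union_inter W A).symm
  have hTmem : {Z' | ∃ X, (X, W) ∈ SEB B P ∧ Z' = X \ A} ∈ RFam P A B Y := by
    refine ⟨W ∩ A, Finset.inter_subset_right, ?_, ?_⟩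
    · rw [← hWdecomp]; exact hWSE
    · rw [← hWdecomp]
  push_neg at hnl
  obtain ⟨T', hT', hnsub⟩ := hnl _ hTmem
  obtain ⟨Z, hZTW, hZT'⟩ := Set.not_subset.mp hnsub
  obtain ⟨X, hXSE, hXZ⟩ := hZTW
  have hZY : Z ≠ Y := fun he => hZT' (he ▸ hYinT T' hT')
  have hWY' : W \ A = Y := hWY
  have hXW : X ≠ W := by
    intro he
    rw [he, hWY'] at hXZ
    exact hZY hXZ
  have hXsub : X ⊂ W ∩ B := by
    rcases (mem_SEB.mp hXSE).1 with h' | h'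
    · exact absurd h' hXW
    · exact h'
  have hZC : Z ⊆ C := by
    rw [hXZ]
    intro x hx
    obtain ⟨hxX, hxA⟩ := Finset.mem_sdiff.mp hx
    have hx2 := (le_of_lt hXsub) hxX
    rw [Finset.mem_inter] at hx2
    have hxY : x ∈ Y := by
      have hxW := hx2.1
      rw [hWdecomp, Finset.mem_union] at hxW
      rcases hxW with h' | h'
      · exact h'
      · exact absurd (Finset.mem_inter.mp h').2 hxA
    exact Finset.mem_inter.mpr ⟨hxY, hx2.2⟩
  have hZN : Z ∉ Ncal := fun hc => hZT' ((Finset.mem_filter.mp hc).2.2 T' hT')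
  apply hkill X hXSE hXsub
  rw [reduct_positive hpos, sat_exrules]
  intro n hn hnX
  have hnZ : n ⊆ Z := by
    rw [hXZ]
    intro x hx
    refine Finset.mem_sdiff.mpr ⟨hnX hx, ?_⟩
    simpa using hCcompl (hNsub n hn hx)
  have hnZne : n ≠ Z := fun he => hZN (he ▸ hn)
  obtain ⟨x, hxZ, hxn⟩ := Finset.exists_of_ssubset (lt_of_le_of_ne hnZ hnZne)
  refine ⟨x, Finset.mem_inter.mpr ⟨Finset.mem_sdiff.mpr ⟨hZC hxZ, hxn⟩, ?_⟩⟩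
  rw [hXZ] at hxZ
  exact (Finset.mem_sdiff.mp hxZ).1
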